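/- The function ρ(x) = 1/(π(1-x²)√(1-2x²)) for |x| < 1/√2 (and 0 otherwise) is a probability density function, i.e., ∫_{-1/√2}^{1/√2} ρ(x) dx = 1. -/

import Mathlib

open MeasureTheory Real Filter Set Topology

noncomputable def konnoF (x : ℝ) : ℝ := Real.arctan (x / Real.sqrt (1 - 2*x^2)) / Real.pi

lemma konno_hasDerivAt {x : ℝ} (hx : x^2 < 1/2) :
    HasDerivAt konnoF (1 / (Real.pi * (1 - x ^ 2) * Real.sqrt (1 - 2 * x ^ 2))) x := by
  have h2 : (0:ℝ) < 1 - 2*x^2 := by nlinarith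
  have hs : 0 < Real.sqrt (1 - 2*x^2) := Real.sqrt_pos.mpr h2
  have hsq : Real.sqrt (1 - 2*x^2) ^ 2 = 1 - 2*x^2 := Real.sq_sqrt h2.le
  have h1 : HasDerivAt (fun y : ℝ => 1 - 2*y^2) (-(4*x)) x := by
    have := ((hasDerivAt_pow 2 x).const_mul (2:ℝ)).const_sub 1
    simpa using this.congr_deriv (by ring)
  have h3 : HasDerivAt (fun y : ℝ => Real.sqrt (1 - 2*y^2))
      (-(4*x) / (2 * Real.sqrt (1 - 2*x^2))) x := h1.sqrt h2.ne'
  have h4 : HasDerivAt (fun y : ℝ => y / Real.sqrt (1 - 2*y^2))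
      ((1 * Real.sqrt (1 - 2*x^2) - x * (-(4*x) / (2 * Real.sqrt (1 - 2*x^2)))) /
        (Real.sqrt (1 - 2*x^2))^2) x :=
    (hasDerivAt_id x).div h3 hs.ne'
  have h5 := (Real.hasDerivAt_arctan (x / Real.sqrt (1 - 2*x^2))).comp x h4
  have h6 := h5.div_const Real.pi
  refine h6.congr_deriv (Eq.symm ?_)
  have hπ := Real.pi_ne_zero
  have h1x : (0:ℝ) < 1 - x^2 := by nlinarith
  rw [div_pow]
  generalize hS : Real.sqrt (1 - 2*x^2) = S at hs hsq ⊢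
  field_simp
  linear_combination (2*x^2) * hsq

theorem konno_density_integrates_to_one :
    ∫ x in Set.Ioo (-(1 / Real.sqrt 2)) (1 / Real.sqrt 2),
      1 / (Real.pi * (1 - x ^ 2) * Real.sqrt (1 - 2 * x ^ 2)) = 1 := by
  set c : ℝ := 1 / Real.sqrt 2 with hcdef
  have hc0 : 0 < c := by positivity
  have hc2 : c^2 = 1/2 := by
    rw [hcdef, div_pow, one_pow, Real.sq_sqrt (by norm_num : (0:ℝ) ≤ 2)]
  clear_value c
  set f : ℝ → ℝ := fun x => 1 / (Real.pi * (1 - x ^ 2) * Real.sqrt (1 - 2 * x ^ 2)) with hfdef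
  have hmem : ∀ x, -c < x → x < c → x^2 < 1/2 := by
    intro x h1 h2
    have habs : |x| < c := abs_lt.mpr ⟨h1, h2⟩
    nlinarith [abs_nonneg x, sq_abs x]
  have hfpos : ∀ x, x^2 < 1/2 → 0 < f x := by
    intro x hx
    have h2 : (0:ℝ) < 1 - 2*x^2 := by nlinarith
    have h1 : (0:ℝ) < 1 - x^2 := by nlinarith
    have hs : 0 < Real.sqrt (1 - 2*x^2) := Real.sqrt_pos.mpr h2
    have : (1 : ℝ) - 2 * x ^ 2 = 1 - 2*x^2 := by ring
    rw [hfdef]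
    simp only [this]
    positivity
  -- continuity of f on compact subintervals
  have hcont : ∀ t, 0 ≤ t → t < c → ContinuousOn f (Set.Icc (-t) t) := by
    intro t ht htc
    apply ContinuousOn.div continuousOn_const
    · exact ((continuousOn_const.mul ((continuousOn_const.sub ((continuousOn_id).pow 2)))).mul
        (Real.continuous_sqrt.comp_continuousOn
          (continuousOn_const.sub (continuousOn_const.mul ((continuousOn_id).pow 2)))))
    · intro x hx
      have hx2 : x^2 < 1/2 := by
        rcases hx with ⟨hx1, hx2⟩
        exact hmem x (lt_of_lt_of_le (neg_lt_neg htc) hx1) (lt_of_le_of_lt hx2 htc)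
      have h2 : (0:ℝ) < 1 - 2*x^2 := by nlinarith
      have h1 : (0:ℝ) < 1 - x^2 := by nlinarith
      have hs : 0 < Real.sqrt (1 - 2*x^2) := Real.sqrt_pos.mpr h2
      have he : (1 : ℝ) - 2 * x ^ 2 = 1 - 2*x^2 := by ring
      rw [he]
      positivity
  -- FTC on symmetric compact subintervals
  have hG : ∀ t, 0 ≤ t → t < c → ∫ x in (-t)..t, f x = 2 * konnoF t := by
    intro t ht htc
    have hle : -t ≤ t := by linarith
    have huIcc : Set.uIcc (-t) t = Set.Icc (-t) t := Set.uIcc_of_le hle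
    have hderiv : ∀ x ∈ Set.uIcc (-t) t, HasDerivAt konnoF (f x) x := by
      intro x hx
      rw [huIcc] at hx
      have hx2 : x^2 < 1/2 :=
        hmem x (lt_of_lt_of_le (neg_lt_neg htc) hx.1) (lt_of_le_of_lt hx.2 htc)
      exact konno_hasDerivAt hx2
    have hint : IntervalIntegrable f volume (-t) t := by
      apply ContinuousOn.intervalIntegrable
      rw [huIcc]; exact hcont t ht htc
    rw [intervalIntegral.integral_eq_sub_of_hasDerivAt hderiv hint]
    have hodd : konnoF (-t) = - konnoF t := by
      unfold konnoF
      have he : (-t)^2 = t^2 := by ring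
      rw [he, neg_div, Real.arctan_neg, neg_div]
    rw [hodd]; ring
  -- sequence of truncation levels
  set v : ℕ → ℝ := fun n => c - c/(n+1) with hvdef
  have hv0 : ∀ n, 0 ≤ v n := by
    intro n
    have h1 : c/((n:ℝ)+1) ≤ c := by
      rw [div_le_iff₀ (by positivity : (0:ℝ) < (n:ℝ)+1)]
      nlinarith [hc0, (Nat.cast_nonneg n : (0:ℝ) ≤ (n:ℝ))]
    simp only [hvdef]; linarith
  have hvlt : ∀ n, v n < c := by
    intro n
    have : 0 < c/((n:ℝ)+1) := by positivity
    simp only [hvdef]; linarith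
  have hvt : Tendsto v atTop (𝓝 c) := by
    have h1 : Tendsto (fun n : ℕ => c/((n:ℝ)+1)) atTop (𝓝 0) := by
      apply Filter.Tendsto.div_atTop tendsto_const_nhds
      exact tendsto_atTop_add_const_right _ 1 tendsto_natCast_atTop_atTop
    have := (tendsto_const_nhds (x := c) (f := atTop)).sub h1
    simpa using this
  clear_value v
  -- limit of the truncated integrals
  have hlim : Tendsto (fun n => ∫ x in (-(v n))..(v n), f x) atTop (𝓝 1) := by
    have heq : ∀ n, ∫ x in (-(v n))..(v n), f x = 2 * konnoF (v n) := fun n =>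
      hG (v n) (hv0 n) (hvlt n)
    have hsqrt_t : Tendsto (fun n => Real.sqrt (1 - 2*(v n)^2)) atTop (𝓝[>] 0) := by
      rw [tendsto_nhdsWithin_iff]
      constructor
      · have h1 : Tendsto (fun n => 1 - 2*(v n)^2) atTop (𝓝 0) := by
          have := ((tendsto_const_nhds (x := (1:ℝ)) (f := atTop)).sub
            ((hvt.pow 2).const_mul 2))
          have he : (1:ℝ) - 2*c^2 = 0 := by rw [hc2]; ring
          rw [he] at this; exact this
        have := (Real.continuous_sqrt.tendsto 0).comp h1
        simpa [Function.comp_def] using this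
      · filter_upwards with n
        have h2 : (v n)^2 < 1/2 := by
          nlinarith [hv0 n, hvlt n, hc2, mul_pos (sub_pos.mpr (hvlt n))
            (show (0:ℝ) < c + v n by linarith [hv0 n, hc0])]
        exact Real.sqrt_pos.mpr (by nlinarith)
    have hinv : Tendsto (fun n => (Real.sqrt (1 - 2*(v n)^2))⁻¹) atTop atTop :=
      tendsto_inv_nhdsGT_zero.comp hsqrt_t
    have hratio : Tendsto (fun n => v n / Real.sqrt (1 - 2*(v n)^2)) atTop atTop := by
      have := hvt.pos_mul_atTop hc0 hinv
      simpa [div_eq_mul_inv] using this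
    have harctan : Tendsto (fun n => Real.arctan (v n / Real.sqrt (1 - 2*(v n)^2)))
        atTop (𝓝 (Real.pi/2)) :=
      (tendsto_nhds_of_tendsto_nhdsWithin Real.tendsto_arctan_atTop).comp hratio
    have hfinal : Tendsto (fun n => 2 * konnoF (v n)) atTop (𝓝 1) := by
      have := (harctan.div_const Real.pi).const_mul 2
      have he : 2 * (Real.pi/2/Real.pi) = 1 := by
        field_simp
      rw [he] at this
      exact this.congr (by intro n; rfl)
    exact hfinal.congr (fun n => (heq n).symm)
  -- assemble via AECover
  have hcover : AECover (volume.restrict (Set.Ioo (-c) c)) atTop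
      (fun n => Set.Ioo (-(v n)) (v n)) :=
    aecover_Ioo_of_Ioo (hvt.neg) hvt
  have hsub : ∀ n, Set.Ioo (-(v n)) (v n) ⊆ Set.Ioo (-c) c := by
    intro n x hx
    have h1 := hx.1; have h2 := hx.2; have h3 := hvlt n
    exact ⟨by linarith, by linarith⟩
  have hrr : ∀ n, (volume.restrict (Set.Ioo (-c) c)).restrict (Set.Ioo (-(v n)) (v n)) =
      volume.restrict (Set.Ioo (-(v n)) (v n)) := by
    intro n
    rw [Measure.restrict_restrict measurableSet_Ioo, Set.inter_eq_left.mpr (hsub n)]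
  have hfi : ∀ n, IntegrableOn f (Set.Ioo (-(v n)) (v n)) (volume.restrict (Set.Ioo (-c) c)) := by
    intro n
    rw [IntegrableOn, hrr n]
    exact ((hcont (v n) (hv0 n) (hvlt n)).integrableOn_Icc).mono_set Set.Ioo_subset_Icc_self
  have hnng : 0 ≤ᵐ[volume.restrict (Set.Ioo (-c) c)] f := by
    filter_upwards [ae_restrict_mem measurableSet_Ioo] with x hx
    exact (hfpos x (hmem x hx.1 hx.2)).le
  have htend : Tendsto (fun n => ∫ x in Set.Ioo (-(v n)) (v n), f x
      ∂(volume.restrict (Set.Ioo (-c) c))) atTop (𝓝 1) := by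
    apply hlim.congr
    intro n
    rw [hrr n, ← MeasureTheory.integral_Ioc_eq_integral_Ioo,
      ← intervalIntegral.integral_of_le (by linarith [hv0 n] : -(v n) ≤ v n)]
  exact hcover.integral_eq_of_tendsto_of_nonneg_ae 1 hnng hfi htend
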